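/- Let k ≥ 1 and let z1, z2, z3 ∈ ℂ be pairwise distinct. If P is a complex polynomial of degree ≤ 2k−1 such that I_{z1,z2}(P·Q) = 0 and I_{z1,z3}(P·Q) = 0 for every complex polynomial Q of degree ≤ k−1, then P = 0. (Nondegeneracy of the bilinear form q_Z.) -/

import Mathlib

open MeasureTheory

/-- Complex line integral `I_{z1,z2}(P) = ∫₀¹ P(z1 + t(z2 - z1)) (z2 - z1) dt`
of a function `P : ℂ → ℂ` over the oriented segment from `z1` to `z2`. -/
noncomputable def lineI (z1 z2 : ℂ) (P : ℂ → ℂ) : ℂ :=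
  ∫ t in (0:ℝ)..1, P (z1 + (t : ℂ) * (z2 - z1)) * (z2 - z1)

namespace QZaux
open Polynomial
noncomputable def pAntideriv (p : ℂ[X]) : ℂ[X] :=
  p.sum fun n c => C (c / (n+1)) * X ^ (n+1)

lemma derivative_pAntideriv (p : ℂ[X]) : derivative (pAntideriv p) = p := by
  unfold pAntideriv
  rw [Polynomial.sum_def, map_sum]
  conv_rhs => rw [← Polynomial.sum_C_mul_X_pow_eq p, Polynomial.sum_def]
  refine Finset.sum_congr rfl fun n hn => ?_
  rw [derivative_C_mul, derivative_X_pow]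
  rw [← mul_assoc, ← C_mul, Nat.add_sub_cancel]
  push_cast
  rw [div_mul_cancel₀]
  exact Nat.cast_add_one_ne_zero n

lemma coeff_zero_pAntideriv (p : ℂ[X]) : (pAntideriv p).coeff 0 = 0 := by
  unfold pAntideriv
  rw [Polynomial.sum_def, Polynomial.finset_sum_coeff]
  refine Finset.sum_eq_zero fun n hn => ?_
  simp [coeff_X_pow]

lemma pAntideriv_unique {F p : ℂ[X]} (h1 : derivative F = p) (h2 : F.coeff 0 = 0) :
    F = pAntideriv p := by
  have hd : derivative (F - pAntideriv p) = 0 := by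
    rw [derivative_sub, h1, derivative_pAntideriv, sub_self]
  have := Polynomial.eq_C_of_derivative_eq_zero hd
  have hc : (F - pAntideriv p).coeff 0 = 0 := by
    rw [coeff_sub, h2, coeff_zero_pAntideriv, sub_self]
  rw [hc, map_zero] at this
  exact sub_eq_zero.mp this

lemma pAntideriv_add (p q : ℂ[X]) :
    pAntideriv (p + q) = pAntideriv p + pAntideriv q := by
  symm
  apply pAntideriv_unique
  · rw [derivative_add, derivative_pAntideriv, derivative_pAntideriv]
  · rw [coeff_add, coeff_zero_pAntideriv, coeff_zero_pAntideriv, add_zero]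

lemma pAntideriv_zero : pAntideriv 0 = 0 := by
  symm; apply pAntideriv_unique <;> simp

lemma coeff_succ_pAntideriv (p : ℂ[X]) (j : ℕ) :
    (pAntideriv p).coeff (j + 1) = p.coeff j / (j + 1) := by
  have h : p.coeff j = (pAntideriv p).coeff (j+1) * (j+1) := by
    conv_lhs => rw [← derivative_pAntideriv p]
    rw [coeff_derivative]
  rw [h, mul_div_cancel_right₀]
  exact Nat.cast_add_one_ne_zero j

lemma natDegree_pAntideriv_le (p : ℂ[X]) :
    (pAntideriv p).natDegree ≤ p.natDegree + 1 := by
  rw [Polynomial.natDegree_le_iff_coeff_eq_zero]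
  intro N hN
  match N, hN with
  | 0, h => exact coeff_zero_pAntideriv p
  | (j+1), h =>
    rw [coeff_succ_pAntideriv]
    rw [Polynomial.coeff_eq_zero_of_natDegree_lt (by omega)]
    simp

lemma eval_zero_pAntideriv (p : ℂ[X]) : (pAntideriv p).eval 0 = 0 := by
  rw [← Polynomial.coeff_zero_eq_eval_zero]; exact coeff_zero_pAntideriv p

lemma pAntideriv_comp_scale {r : ℂ} (hr : r ≠ 0) (p : ℂ[X]) :
    pAntideriv (p.comp (C r * X)) = C r⁻¹ * (pAntideriv p).comp (C r * X) := by
  symm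
  apply pAntideriv_unique
  · rw [derivative_C_mul, derivative_comp, derivative_pAntideriv]
    rw [derivative_mul, derivative_C, derivative_X, zero_mul, mul_one, zero_add]
    rw [← mul_assoc, ← C_mul, inv_mul_cancel₀ hr, C_1, one_mul]
  · rw [Polynomial.mul_coeff_zero, Polynomial.coeff_zero_eq_eval_zero,
      Polynomial.coeff_zero_eq_eval_zero, eval_comp]
    simp [eval_zero_pAntideriv]

lemma pAntideriv_iterate_comp_scale {r : ℂ} (hr : r ≠ 0) (p : ℂ[X]) (m : ℕ) :
    pAntideriv^[m] (p.comp (C r * X)) = C (r⁻¹ ^ m) * (pAntideriv^[m] p).comp (C r * X) := by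
  induction m with
  | zero => simp
  | succ m ih =>
    rw [Function.iterate_succ_apply', Function.iterate_succ_apply', ih]
    have : pAntideriv (C (r⁻¹ ^ m) * (pAntideriv^[m] p).comp (C r * X))
        = C (r⁻¹ ^ m) * pAntideriv ((pAntideriv^[m] p).comp (C r * X)) := by
      symm
      apply pAntideriv_unique
      · rw [derivative_C_mul, derivative_pAntideriv]
      · rw [Polynomial.mul_coeff_zero, coeff_zero_pAntideriv, mul_zero]
    rw [this, pAntideriv_comp_scale hr, ← mul_assoc, ← C_mul, ← pow_succ]

lemma coeff_pAntideriv_iterate (p : ℂ[X]) (m : ℕ) : ∀ j < m, (pAntideriv^[m] p).coeff j = 0 := by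
  induction m with
  | zero => omega
  | succ m ih =>
    intro j hj
    rw [Function.iterate_succ_apply']
    match j with
    | 0 => exact coeff_zero_pAntideriv _
    | (i+1) =>
      rw [coeff_succ_pAntideriv, ih i (by omega)]
      simp

lemma derivative_iterate_pAntideriv (p : ℂ[X]) (m : ℕ) :
    derivative^[m] (pAntideriv^[m] p) = p := by
  induction m with
  | zero => rfl
  | succ m ih =>
    rw [Function.iterate_succ_apply' (f := pAntideriv), Function.iterate_succ_apply]
    rw [derivative_pAntideriv, ih]

lemma derivative_iterate_pAntideriv' (p : ℂ[X]) (j m : ℕ) :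
    derivative^[j] (pAntideriv^[j + m] p) = pAntideriv^[m] p := by
  rw [Function.iterate_add_apply]
  exact derivative_iterate_pAntideriv _ j

lemma parts (u B : ℂ[X]) :
    pAntideriv u * B = pAntideriv (u * B) + pAntideriv (pAntideriv u * derivative B) := by
  rw [← pAntideriv_add]
  apply pAntideriv_unique
  · rw [derivative_mul, derivative_pAntideriv]
  · rw [Polynomial.mul_coeff_zero, coeff_zero_pAntideriv, zero_mul]

lemma orth_step (u : ℂ[X]) (m : ℕ)
    (H : ∀ q : ℂ[X], q.natDegree < m + 1 → (pAntideriv (u * q)).eval 1 = 0) :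
    (pAntideriv u).eval 1 = 0 ∧
      ∀ q : ℂ[X], q.natDegree < m → (pAntideriv (pAntideriv u * q)).eval 1 = 0 := by
  have h1 : (pAntideriv u).eval 1 = 0 := by
    have h0 := H 1 (by simp)
    rwa [mul_one] at h0
  refine ⟨h1, fun q hq => ?_⟩
  set B : ℂ[X] := pAntideriv q - C ((pAntideriv q).eval 1) with hB
  have hdB : derivative B = q := by
    rw [hB, derivative_sub, derivative_pAntideriv, derivative_C, sub_zero]
  have hBdeg : B.natDegree < m + 1 := by
    refine lt_of_le_of_lt (Polynomial.natDegree_sub_le _ _) ?_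
    have := natDegree_pAntideriv_le q
    simp only [Polynomial.natDegree_C]
    omega
  have hB1 : B.eval 1 = 0 := by simp [hB]
  have hp := parts u B
  have := congrArg (Polynomial.eval 1) hp
  rw [Polynomial.eval_add, Polynomial.eval_mul, h1, zero_mul, hdB, H B hBdeg, zero_add] at this
  exact this.symm

lemma eval_one_iterate : ∀ (m : ℕ) (u : ℂ[X]),
    (∀ q : ℂ[X], q.natDegree < m → (pAntideriv (u * q)).eval 1 = 0) →
    ∀ i < m, (pAntideriv^[i + 1] u).eval 1 = 0 := by
  intro m
  induction m with
  | zero => omega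
  | succ m ih =>
    intro u H i hi
    obtain ⟨h1, h2⟩ := orth_step u m H
    match i with
    | 0 => simpa using h1
    | (j + 1) =>
      rw [Function.iterate_succ_apply]
      exact ih (pAntideriv u) h2 j (by omega)

lemma dvd_of_orth (k : ℕ) (u : ℂ[X])
    (H : ∀ q : ℂ[X], q.natDegree < k → (pAntideriv (u * q)).eval 1 = 0) :
    X ^ k * (X - C 1) ^ k ∣ pAntideriv^[k] u := by
  set w : ℂ[X] := pAntideriv^[k] u with hw
  have hdvd0 : X ^ k ∣ w := Polynomial.X_pow_dvd_iff.mpr (coeff_pAntideriv_iterate u k)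
  have hE := eval_one_iterate k u H
  have hdvd1 : (X - C 1) ^ k ∣ w := by
    have htay : X ^ k ∣ Polynomial.taylor 1 w := by
      rw [Polynomial.X_pow_dvd_iff]
      intro d hd
      rw [Polynomial.taylor_coeff]
      have hfact := congrFun (Polynomial.factorial_smul_hasseDeriv (R := ℂ) d) w
      have hder : derivative^[d] w = pAntideriv^[k - d] u := by
        rw [hw, show k = d + (k - d) by omega, derivative_iterate_pAntideriv']
        congr 1
        omega
      have heval : (derivative^[d] w).eval 1 = 0 := by
        rw [hder, show k - d = (k - d - 1) + 1 by omega]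
        exact hE _ (by omega)
      have hz : ((d.factorial • Polynomial.hasseDeriv d) w).eval 1 = 0 := by
        rw [hfact]; exact heval
      rw [LinearMap.smul_apply] at hz
      simp only [Polynomial.eval_smul, nsmul_eq_mul, Polynomial.eval_mul,
        Polynomial.eval_natCast] at hz
      have hne : ((d.factorial : ℂ)) ≠ 0 := Nat.cast_ne_zero.mpr (Nat.factorial_ne_zero d)
      exact (mul_eq_zero.mp hz).resolve_left hne
    obtain ⟨g, hg⟩ := htay
    rw [Polynomial.taylor_apply] at hg
    have hcomp : w = (X - C 1) ^ k * g.comp (X - C 1) := by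
      have := congrArg (fun p => p.comp (X - C 1)) hg
      rw [Polynomial.comp_assoc] at this
      simp only [Polynomial.add_comp, Polynomial.X_comp, Polynomial.C_comp,
        sub_add_cancel, Polynomial.comp_X, Polynomial.mul_comp, Polynomial.pow_comp,
        Polynomial.X_comp] at this
      exact this
    exact ⟨_, hcomp⟩
  have hcop : IsCoprime ((X : ℂ[X]) ^ k) ((X - C 1) ^ k) := by
    have h01 : IsUnit ((0:ℂ) - 1) := isUnit_iff_ne_zero.mpr (by norm_num)
    have h2 := Polynomial.isCoprime_X_sub_C_of_isUnit_sub h01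
    have h3 : IsCoprime (X : ℂ[X]) (X - C 1) := by simpa using h2
    exact h3.pow
  exact hcop.mul_dvd hdvd0 hdvd1

lemma natDegree_pAntideriv_iterate_le (p : ℂ[X]) (m : ℕ) :
    (pAntideriv^[m] p).natDegree ≤ p.natDegree + m := by
  induction m with
  | zero => simp
  | succ m ih =>
    rw [Function.iterate_succ_apply']
    calc (pAntideriv (pAntideriv^[m] p)).natDegree ≤ (pAntideriv^[m] p).natDegree + 1 :=
          natDegree_pAntideriv_le _
    _ ≤ p.natDegree + (m + 1) := by omega

lemma core (k : ℕ) (hk : 1 ≤ k) (r : ℂ) (hr0 : r ≠ 0) (hr1 : r ≠ 1) (u : ℂ[X])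
    (hu : u.natDegree ≤ 2 * k - 1)
    (h1 : ∀ q : ℂ[X], q.natDegree < k → (pAntideriv (u * q)).eval 1 = 0)
    (h2 : ∀ q : ℂ[X], q.natDegree < k → (pAntideriv (u.comp (C r * X) * q)).eval 1 = 0) :
    u = 0 := by
  by_contra hu0
  set w : ℂ[X] := pAntideriv^[k] u with hw
  have hwne : w ≠ 0 := by
    intro h0
    apply hu0
    have := derivative_iterate_pAntideriv u k
    rw [← hw, h0] at this
    simpa using this.symm
  obtain ⟨g, hg⟩ := dvd_of_orth k u h1
  rw [← hw] at hg
  have hgne : g ≠ 0 := by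
    intro h0; rw [h0, mul_zero] at hg; exact hwne hg
  -- degree bound on g
  have hwdeg : w.natDegree ≤ 3 * k - 1 := by
    have := natDegree_pAntideriv_iterate_le u k
    rw [← hw] at this
    omega
  have hXne : ((X : ℂ[X]) ^ k) ≠ 0 := pow_ne_zero _ Polynomial.X_ne_zero
  have hX1ne : (((X : ℂ[X]) - C 1) ^ k) ≠ 0 := pow_ne_zero _ (Polynomial.X_sub_C_ne_zero 1)
  have hdegw : w.natDegree = 2 * k + g.natDegree := by
    rw [hg, Polynomial.natDegree_mul (mul_ne_zero hXne hX1ne) hgne,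
      Polynomial.natDegree_mul hXne hX1ne, Polynomial.natDegree_pow,
      Polynomial.natDegree_pow, Polynomial.natDegree_X, Polynomial.natDegree_X_sub_C]
    ring
  have hgdeg : g.natDegree < k := by omega
  -- second segment
  obtain ⟨h', hg'⟩ := dvd_of_orth k (u.comp (C r * X)) h2
  rw [pAntideriv_iterate_comp_scale hr0 u k, ← hw] at hg'
  have hw' : w.comp (C r * X) = (X - C 1) ^ k * (C (r ^ k) * X ^ k * h') := by
    have h3 := congrArg (fun p => C (r ^ k) * p) hg'
    rw [← mul_assoc, ← C_mul,
      show r ^ k * r⁻¹ ^ k = 1 by rw [← mul_pow, mul_inv_cancel₀ hr0, one_pow],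
      C_1, one_mul] at h3
    rw [h3, C_1]; ring
  have hdvd : (X - C 1) ^ k ∣ w.comp (C r * X) := ⟨_, hw'⟩
  have hcompeq : w.comp (C r * X)
      = (C r * X) ^ k * ((C r * X - C 1) ^ k * g.comp (C r * X)) := by
    rw [hg]
    simp only [Polynomial.mul_comp, Polynomial.pow_comp, Polynomial.sub_comp,
      Polynomial.X_comp, Polynomial.C_comp]
    ring
  have cop1 : IsCoprime ((X : ℂ[X]) - C 1) (C r * X) := by
    rw [isCoprime_mul_unit_left_right (Polynomial.isUnit_C.mpr (isUnit_iff_ne_zero.mpr hr0))]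
    have h01 : IsUnit ((1:ℂ) - 0) := isUnit_iff_ne_zero.mpr (by norm_num)
    have h2' := Polynomial.isCoprime_X_sub_C_of_isUnit_sub h01
    simpa using h2'
  have cop2 : IsCoprime ((X : ℂ[X]) - C 1) (C r * X - C 1) := by
    have hrw : C r * X - C 1 = C r * (X - C r⁻¹) := by
      rw [mul_sub, ← C_mul, mul_inv_cancel₀ hr0]
    rw [hrw, isCoprime_mul_unit_left_right (Polynomial.isUnit_C.mpr (isUnit_iff_ne_zero.mpr hr0))]
    refine Polynomial.isCoprime_X_sub_C_of_isUnit_sub (isUnit_iff_ne_zero.mpr ?_)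
    intro h0
    apply hr1
    rw [sub_eq_zero] at h0
    exact inv_eq_one.mp h0.symm
  have hfinal : (X - C 1) ^ k ∣ g.comp (C r * X) := by
    have hd1 := (cop1.pow (m := k) (n := k)).dvd_of_dvd_mul_left (by rw [← hcompeq]; exact hdvd)
    exact (cop2.pow (m := k) (n := k)).dvd_of_dvd_mul_left hd1
  have hgcne : g.comp (C r * X) ≠ 0 := by
    intro h0
    apply hgne
    have h3 := congrArg (fun p => p.comp (C r⁻¹ * X)) h0
    simp only [Polynomial.zero_comp] at h3
    rw [Polynomial.comp_assoc] at h3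
    simp only [Polynomial.mul_comp, Polynomial.C_comp, Polynomial.X_comp] at h3
    rw [← mul_assoc, ← C_mul, mul_inv_cancel₀ hr0, C_1, one_mul, Polynomial.comp_X] at h3
    exact h3
  have hdeg := Polynomial.natDegree_le_of_dvd hfinal hgcne
  rw [Polynomial.natDegree_pow, Polynomial.natDegree_X_sub_C, mul_one,
    Polynomial.natDegree_comp, Polynomial.natDegree_C_mul_X r hr0, mul_one] at hdeg
  omega

lemma integral_poly (u : ℂ[X]) :
    (∫ t in (0:ℝ)..1, u.eval (t : ℂ)) = (pAntideriv u).eval 1 := by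
  have hderiv : ∀ t ∈ Set.uIcc (0:ℝ) 1,
      HasDerivAt (fun s : ℝ => (pAntideriv u).eval (s : ℂ)) (u.eval (t : ℂ)) t := by
    intro t _
    have h1 : HasDerivAt (fun z : ℂ => (pAntideriv u).eval z) (u.eval (t : ℂ)) (t : ℂ) := by
      have := (pAntideriv u).hasDerivAt (t : ℂ)
      rwa [derivative_pAntideriv] at this
    exact h1.comp_ofReal
  have hint : IntervalIntegrable (fun t : ℝ => u.eval (t : ℂ)) volume 0 1 :=
    (u.continuous_aeval.comp Complex.continuous_ofReal).intervalIntegrable 0 1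
  rw [intervalIntegral.integral_eq_sub_of_hasDerivAt hderiv hint]
  push_cast
  rw [eval_zero_pAntideriv, sub_zero]

lemma lineI_poly (z1 z2 : ℂ) (A : ℂ[X]) :
    lineI z1 z2 (fun z => A.eval z)
      = (z2 - z1) * (pAntideriv (A.comp (C z1 + C (z2 - z1) * X))).eval 1 := by
  unfold lineI
  have h : ∀ t : ℝ, A.eval (z1 + (t:ℂ) * (z2 - z1)) * (z2 - z1)
      = (z2 - z1) * (A.comp (C z1 + C (z2 - z1) * X)).eval (t : ℂ) := by
    intro t
    rw [Polynomial.eval_comp]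
    simp only [Polynomial.eval_add, Polynomial.eval_mul, Polynomial.eval_C, Polynomial.eval_X]
    ring_nf
  simp_rw [h]
  rw [intervalIntegral.integral_const_mul, integral_poly]

lemma hQcomp (z1 : ℂ) (c : ℂ) (hc : c ≠ 0) (q : ℂ[X]) :
    (q.comp ((X - C z1) * C c⁻¹)).comp (C z1 + C c * X) = q := by
  have hin : ((X - C z1) * C c⁻¹).comp (C z1 + C c * X) = X := by
    simp only [Polynomial.mul_comp, Polynomial.sub_comp, Polynomial.X_comp, Polynomial.C_comp]
    rw [add_sub_cancel_left, mul_comm (C c) X, mul_assoc, ← C_mul, mul_inv_cancel₀ hc, C_1,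
      mul_one]
  rw [Polynomial.comp_assoc, hin, Polynomial.comp_X]

lemma hQdeg (z1 : ℂ) (c : ℂ) (q : ℂ[X]) :
    (q.comp ((X - C z1) * C c⁻¹)).natDegree ≤ q.natDegree := by
  rw [Polynomial.natDegree_comp]
  have h1 : ((X - C z1) * C c⁻¹).natDegree ≤ 1 := by
    refine le_trans (Polynomial.natDegree_mul_le) ?_
    rw [Polynomial.natDegree_X_sub_C, Polynomial.natDegree_C]
  calc q.natDegree * ((X - C z1) * C c⁻¹).natDegree ≤ q.natDegree * 1 :=
        Nat.mul_le_mul_left _ h1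
  _ = q.natDegree := mul_one _


end QZaux

open QZaux Polynomial in
theorem qZ_nondegenerate (k : ℕ) (hk : 1 ≤ k) (z1 z2 z3 : ℂ)
    (h12 : z1 ≠ z2) (h23 : z2 ≠ z3) (h13 : z1 ≠ z3)
    (P : Polynomial ℂ) (hP : P.natDegree ≤ 2 * k - 1)
    (hvan : ∀ Q : Polynomial ℂ, Q.natDegree ≤ k - 1 →
      lineI z1 z2 (fun z => P.eval z * Q.eval z) = 0 ∧
      lineI z1 z3 (fun z => P.eval z * Q.eval z) = 0) :
    P = 0 := by
  set a := z2 - z1 with ha'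
  set b := z3 - z1 with hb'
  have ha : a ≠ 0 := sub_ne_zero.mpr (Ne.symm h12)
  have hb : b ≠ 0 := sub_ne_zero.mpr (Ne.symm h13)
  have hab : a ≠ b := by
    intro h
    apply h23
    have : z2 - z1 = z3 - z1 := h
    linear_combination this
  set r := b / a with hr'
  have hr0 : r ≠ 0 := div_ne_zero hb ha
  have hr1 : r ≠ 1 := by
    intro h
    apply hab
    rw [hr', div_eq_one_iff_eq ha] at h
    exact h.symm
  set Pa := P.comp (C z1 + C a * X) with hPa
  have hPb : P.comp (C z1 + C b * X) = Pa.comp (C r * X) := by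
    rw [hPa, Polynomial.comp_assoc]
    congr 1
    simp only [Polynomial.add_comp, Polynomial.C_comp, Polynomial.mul_comp, Polynomial.X_comp]
    rw [← mul_assoc, ← C_mul]
    congr 2
    exact congrArg C (by rw [hr']; field_simp)
  have h1 : ∀ q : ℂ[X], q.natDegree < k → (pAntideriv (Pa * q)).eval 1 = 0 := by
    intro q hq
    set Q := q.comp ((X - C z1) * C a⁻¹) with hQ
    have hdeg : Q.natDegree ≤ k - 1 := le_trans (hQdeg z1 a q) (by omega)
    have hv := (hvan Q hdeg).1
    rw [show (fun z => P.eval z * Q.eval z) = fun z => (P * Q).eval z from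
      funext fun z => (Polynomial.eval_mul).symm] at hv
    rw [lineI_poly, Polynomial.mul_comp] at hv
    rw [← ha'] at hv
    rw [← hPa, hQ, hQcomp z1 a ha q] at hv
    exact (mul_eq_zero.mp hv).resolve_left ha
  have h2 : ∀ q : ℂ[X], q.natDegree < k → (pAntideriv (Pa.comp (C r * X) * q)).eval 1 = 0 := by
    intro q hq
    set Q := q.comp ((X - C z1) * C b⁻¹) with hQ
    have hdeg : Q.natDegree ≤ k - 1 := le_trans (hQdeg z1 b q) (by omega)
    have hv := (hvan Q hdeg).2
    rw [show (fun z => P.eval z * Q.eval z) = fun z => (P * Q).eval z from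
      funext fun z => (Polynomial.eval_mul).symm] at hv
    rw [lineI_poly, Polynomial.mul_comp] at hv
    rw [← hb'] at hv
    rw [hPb, hQ, hQcomp z1 b hb q] at hv
    exact (mul_eq_zero.mp hv).resolve_left hb
  have hPadeg : Pa.natDegree ≤ 2 * k - 1 := by
    rw [hPa, Polynomial.natDegree_comp]
    have h1' : (C z1 + C a * X).natDegree = 1 := by
      rw [add_comm, Polynomial.natDegree_add_C, Polynomial.natDegree_C_mul_X a ha]
    rw [h1', mul_one]
    exact hP
  have hPa0 : Pa = 0 := core k hk r hr0 hr1 Pa hPadeg h1 h2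
  have hfin : P = Pa.comp ((X - C z1) * C a⁻¹) := by
    rw [hPa, Polynomial.comp_assoc]
    have hin2 : (C z1 + C a * X).comp ((X - C z1) * C a⁻¹) = X := by
      simp only [Polynomial.add_comp, Polynomial.C_comp, Polynomial.mul_comp, Polynomial.X_comp]
      rw [mul_comm (X - C z1) (C a⁻¹), ← mul_assoc, ← C_mul, mul_inv_cancel₀ ha, C_1, one_mul]
      ring
    rw [hin2, Polynomial.comp_X]
  rw [hfin, hPa0, Polynomial.zero_comp]
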